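/- Under the assumptions of the previous statement (ψ_k(S_{k+1}/S_k) = a_k, ψ_K ≡ a_K), the absolute consumption rates satisfy X_k = [(∏_{j=k}^{K} a_j)/(1 + Σ_{j=0}^{K-1} ∏_{i=j}^{K} a_i)]·S_k for k = 0,...,K. -/

import Mathlib

open MeasureTheory Finset

/-- if `ψ_k(S_{k+1}/S_k) ≡ a_k` and `ψ_K ≡ a_K`, the absolute consumption
rates satisfy `X_k = (∏_{j=k}^K a_j)/(1 + ∑_{j=0}^{K-1} ∏_{i=j}^K a_i) · S_k`. -/
theorem deterministic_absolute_rates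
    {Ω : Type*} {m : MeasurableSpace Ω} (K : ℕ) (ℱ : Filtration ℕ m)
    (S A : ℕ → Ω → ℝ) (X Z : ℕ → Ω → ℝ) (a : ℕ → ℝ)
    (hSadapted : ∀ k : ℕ, Measurable[ℱ k] (S k))
    (hSpos : ∀ k ω, 0 < S k ω)
    (ψ : ℕ → (Ω → ℝ) → (Ω → ℝ)) (ψK : Ω → ℝ)
    (hψmeas : ∀ k < K, ∀ f : Ω → ℝ, Measurable[ℱ (k + 1)] f → Measurable[ℱ k] (ψ k f))
    (hψpos : ∀ k < K, ∀ f : Ω → ℝ, (∀ ω, 0 ≤ f ω) → ∀ ω, 0 ≤ ψ k f ω)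
    (hψneg : ∀ k < K, ∀ f : Ω → ℝ, (∀ ω, f ω ≤ 0) → ∀ ω, ψ k f ω ≤ 0)
    (hψhom : ∀ k < K, ∀ f g : Ω → ℝ, Measurable[ℱ (k + 1)] f → Measurable[ℱ k] g →
      (∀ ω, 0 ≤ g ω) → ψ k (fun ω => g ω * f ω) = fun ω => g ω * ψ k f ω)
    (hψKmeas : Measurable[ℱ K] ψK) (hψK01 : ∀ ω, 0 ≤ ψK ω ∧ ψK ω ≤ 1)
    (ha : ∀ k ≤ K, 0 ≤ a k)
    (hψS : ∀ k < K, ψ k (fun ω => S (k + 1) ω / S k ω) = fun _ => a k)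
    (hψKa : ψK = fun _ => a K)
    -- Z given by the backward recursion of Theorem 1, X and A by the forward recursion
    (hZK : Z K = ψK)
    (hZrec : ∀ k < K, ∀ ω, Z k ω =
      ψ k (fun ω' => Z (k + 1) ω' * S (k + 1) ω') ω /
        (S k ω + ψ k (fun ω' => Z (k + 1) ω' * S (k + 1) ω') ω))
    (hX : ∀ k ≤ K, ∀ ω, X k ω = Z k ω * A k ω)
    (hA0 : ∀ ω, A 0 ω = S 0 ω)
    (hArec : ∀ k < K, ∀ ω, A (k + 1) ω = (A k ω - X k ω) * S (k + 1) ω / S k ω) :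
    ∀ k ≤ K, ∀ ω, X k ω =
      (∏ j ∈ Icc k K, a j) / (1 + ∑ j ∈ Ico 0 K, ∏ i ∈ Icc j K, a i) * S k ω := by
  classical
  set b : ℕ → ℝ := fun k => ∏ i ∈ Icc k K, a i with hbdef
  set D : ℕ → ℝ := fun k => 1 + ∑ j ∈ Ico k K, b j with hDdef
  have hb : ∀ k, 0 ≤ b k := fun k =>
    Finset.prod_nonneg fun i hi => ha i (mem_Icc.mp hi).2
  have hDpos : ∀ k, 0 < D k := fun k =>
    add_pos_of_pos_of_nonneg one_pos (Finset.sum_nonneg fun j _ => hb j)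
  have hbsplit : ∀ k < K, b k = a k * b (k+1) := by
    intro k hk
    have h : Icc k K = insert k (Icc (k+1) K) := by
      ext i; simp only [mem_Icc, Finset.mem_insert]; omega
    simp only [hbdef]
    rw [h, Finset.prod_insert (by simp)]
  have hDsplit : ∀ k < K, D k = b k + D (k+1) := by
    intro k hk
    have h : Ico k K = insert k (Ico (k+1) K) := by
      ext i; simp only [mem_Ico, Finset.mem_insert]; omega
    simp only [hDdef]
    rw [h, Finset.sum_insert (by simp)]
    ring
  have hbK : b K = a K := by simp [hbdef]
  have hDK : D K = 1 := by simp [hDdef]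
  clear_value b D
  -- the Z values are deterministic
  have hZ : ∀ d k, k + d = K → Z k = fun _ => b k / D k := by
    intro d
    induction d with
    | zero =>
      intro k hk
      have hkK : k = K := by omega
      rw [hkK, hZK, hψKa, hbK, hDK, div_one]
    | succ d ih =>
      intro k hk
      have hkK : k < K := by omega
      have hnext := ih (k+1) (by omega)
      have hc0 : 0 ≤ b (k+1) / D (k+1) := div_nonneg (hb _) (hDpos _).le
      funext ω
      have hψeq : ψ k (fun ω' => Z (k+1) ω' * S (k+1) ω')
          = fun ω' => (b (k+1) / D (k+1) * S k ω') * a k := by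
        have heq : (fun ω' => Z (k+1) ω' * S (k+1) ω')
            = fun ω' => (b (k+1) / D (k+1) * S k ω') * (S (k+1) ω' / S k ω') := by
          funext ω'
          rw [hnext]
          have hS' : S k ω' ≠ 0 := (hSpos k ω').ne'
          have hD1' : D (k+1) ≠ 0 := (hDpos (k+1)).ne'
          field_simp
        rw [heq, hψhom k hkK (fun ω' => S (k+1) ω' / S k ω') (fun ω' => b (k+1) / D (k+1) * S k ω')
          ((hSadapted (k+1)).div ((hSadapted k).mono (ℱ.mono (Nat.le_succ k)) le_rfl))
          (measurable_const.mul (hSadapted k))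
          (fun ω' => mul_nonneg hc0 (hSpos k ω').le),
          hψS k hkK]
      rw [hZrec k hkK ω, hψeq]
      have hS := (hSpos k ω)
      have hak := ha k hkK.le
      have hden : 0 < S k ω + b (k+1) / D (k+1) * S k ω * a k :=
        add_pos_of_pos_of_nonneg hS (mul_nonneg (mul_nonneg hc0 hS.le) hak)
      rw [hbsplit k hkK, hDsplit k hkK, hbsplit k hkK]
      have hD1 := hDpos (k+1)
      have hDk : (0:ℝ) < a k * b (k+1) + D (k+1) := by
        have := hDpos k
        rw [hDsplit k hkK, hbsplit k hkK] at this
        exact this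
      rw [div_eq_div_iff hden.ne' hDk.ne']
      field_simp
      ring
  have hZ' : ∀ k ≤ K, Z k = fun _ => b k / D k := fun k hk => hZ (K - k) k (by omega)
  -- A values
  have hA : ∀ k ≤ K, ∀ ω, A k ω = D k / D 0 * S k ω := by
    intro k
    induction k with
    | zero =>
      intro _ ω
      rw [hA0, div_self (hDpos 0).ne']
      ring
    | succ k ih =>
      intro hk ω
      have hkK : k < K := by omega
      have hAk := ih hkK.le ω
      have hXk := hX k hkK.le ω
      rw [hZ' k hkK.le] at hXk
      rw [hArec k hkK ω, hXk, hAk]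
      have hS := hSpos k ω
      have hDk := hDpos k
      have hD0 := hDpos 0
      have hd : D (k+1) = D k - b k := by rw [hDsplit k hkK]; ring
      rw [hd]
      field_simp
  -- conclusion
  intro k hk ω
  rw [hX k hk ω, hZ' k hk, hA k hk ω]
  have hDk := (hDpos k).ne'
  have hD0 := (hDpos 0).ne'
  have h : b k / D k * (D k / D 0 * S k ω) = b k / D 0 * S k ω := by
    field_simp
  show b k / D k * (D k / D 0 * S k ω) = _
  rw [h]
  simp only [hbdef, hDdef]
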